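/- Let S be a commutative noetherian ring and let R be a localization of S with respect to a multiplicatively closed subset of S. Then fdd(S) ≤ fdd(R). -/

import Mathlib

/-!
Statement 17: If `S` is a commutative noetherian ring and `R` a localization of `S` with
respect to a multiplicatively closed subset, then `fdd(S) ≤ fdd(R)`.
-/

universe u

/-- `fddGE R n M` holds iff there is an exact sequence
`0 → M → I^0 → ⋯ → I^(n-1)` of `R`-modules in which every `I^j` is both
flat and injective; i.e. the flat-dominant dimension of `M` is at least `n`. -/
def fddGE (R : Type u) [CommRing R] :
    ℕ → (M : Type u) → [AddCommGroup M] → [Module R M] → Prop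
  | 0, _, _, _ => True
  | (n+1), M, iM, mM =>
      letI := iM; letI := mM
      ∃ (I : Type u) (_ : AddCommGroup I) (_ : Module R I),
        Module.Flat R I ∧ Module.Injective R I ∧
        ∃ f : M →ₗ[R] I, Function.Injective f ∧ fddGE R n (I ⧸ LinearMap.range f)


section Aux

variable {S : Type u} [CommRing S] (W : Submonoid S)
  (R : Type u) [CommRing R] [Algebra S R] [IsLocalization W R]

lemma aux_end_isUnit (M' : Type*) [AddCommGroup M'] [Module S M'] [Module R M']
    [IsScalarTower S R M'] (w : W) :
    IsUnit (algebraMap S (Module.End S M') (w : S)) := by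
  have hu : IsUnit (algebraMap S R (w : S)) := IsLocalization.map_units R w
  refine (Module.End.isUnit_iff _).mpr ⟨fun m n e => ?_, fun m => ⟨((hu.unit⁻¹ : Rˣ) : R) • m, ?_⟩⟩
  · have e' : (algebraMap S R (w : S)) • m = (algebraMap S R (w : S)) • n := by
      simpa only [Module.algebraMap_end_apply, algebraMap_smul] using e
    have := congrArg (fun x => ((hu.unit⁻¹ : Rˣ) : R) • x) e'
    simpa only [smul_smul, IsUnit.val_inv_mul, one_smul, hu.unit_spec] using this
  · rw [Module.algebraMap_end_apply, ← algebraMap_smul R (w : S), smul_smul, hu.mul_val_inv,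
      one_smul]

end Aux

section Aux2

variable {S : Type u} [CommRing S] (W : Submonoid S)
  (R : Type u) [CommRing R] [Algebra S R] [IsLocalization W R]

/-- Two `R`-linear maps out of a localized module agree if they agree on the image. -/
lemma aux_ext {M M' N' : Type*} [AddCommGroup M] [Module S M]
    [AddCommGroup M'] [Module S M'] [Module R M'] [IsScalarTower S R M']
    [AddCommGroup N'] [Module S N'] [Module R N'] [IsScalarTower S R N']
    (k : M →ₗ[S] M') [IsLocalizedModule W k]
    (a b : M' →ₗ[R] N') (h : ∀ x, a (k x) = b (k x)) : a = b := by
  have := IsLocalizedModule.ext W k (M'' := N')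
    (fun w => aux_end_isUnit W R N' w)
    (j := a.restrictScalars S) (k := b.restrictScalars S)
    (by ext x; simpa using h x)
  ext y
  exact congrArg (fun (f : M' →ₗ[S] N') => f y) this

lemma aux_injective [IsNoetherianRing S]
    (I : Type u) [AddCommGroup I] [Module S I] [Module.Injective S I]
    (I' : Type u) [AddCommGroup I'] [Module S I'] [Module R I'] [IsScalarTower S R I']
    (ι : I →ₗ[S] I') [IsLocalizedModule W ι] : Module.Injective R I' := by
  apply Module.Baer.injective
  intro J' g
  set J : Ideal S := J'.comap (algebraMap S R) with hJ
  -- the canonical map `J →ₗ[S] J'` is a localization map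
  let k : J →ₗ[S] J' :=
    { toFun := fun x => ⟨algebraMap S R x, x.2⟩
      map_add' := by intro x y; ext; simp
      map_smul' := by intro s x; ext; simp [Algebra.smul_def] }
  haveI : IsLocalizedModule W k := by
    constructor
    · exact fun w => aux_end_isUnit W R (↥J') w
    · intro y
      obtain ⟨⟨x, w⟩, hx⟩ := IsLocalization.surj W (y : R)
      have hmem : x ∈ J := by
        rw [hJ, Ideal.mem_comap, ← hx]
        exact J'.mul_mem_right _ y.2
      refine ⟨⟨⟨x, hmem⟩, w⟩, ?_⟩
      ext
      simpa [k, Submonoid.smul_def, Algebra.smul_def, mul_comm] using hx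
    · intro x y e
      have : algebraMap S R (x : S) = algebraMap S R (y : S) := congrArg Subtype.val e
      obtain ⟨c, hc⟩ := (IsLocalization.eq_iff_exists W R).mp this
      exact ⟨c, by ext; simpa [Submonoid.smul_def, smul_eq_mul] using hc⟩
  haveI : Module.Finite S ↥J := Module.Finite.iff_fg.mpr (IsNoetherian.noetherian J)
  haveI : Module.FinitePresentation S ↥J := Module.finitePresentation_of_finite S ↥J
  obtain ⟨⟨h, w⟩, hw⟩ := IsLocalizedModule.surj W (IsLocalizedModule.mapExtendScalars W k ι R) g
  obtain ⟨H, hH⟩ := Module.Injective.out (J.subtype) Subtype.val_injective h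
  have hu : IsUnit (algebraMap S R (w : S)) := IsLocalization.map_units R w
  set G₀ : R →ₗ[R] I' := IsLocalizedModule.mapExtendScalars W (Algebra.linearMap S R) ι R H
    with hG₀
  have key : G₀ ∘ₗ (J'.subtype) = IsLocalizedModule.mapExtendScalars W k ι R h := by
    apply aux_ext W R k
    intro x
    have h1 : (G₀ ∘ₗ J'.subtype) (k x) = G₀ ((Algebra.linearMap S R) (x : S)) := rfl
    rw [h1, hG₀]
    simp only [IsLocalizedModule.mapExtendScalars_apply_apply]
    rw [IsLocalizedModule.map_apply, IsLocalizedModule.map_apply]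
    exact congrArg ι (hH x)
  refine ⟨((hu.unit⁻¹ : Rˣ) : R) • G₀, fun x hx => ?_⟩
  have h2 : G₀ x = (w : S) • g ⟨x, hx⟩ := by
    have := congrArg (fun (f : ↥J' →ₗ[R] I') => f ⟨x, hx⟩) (key.trans hw.symm)
    simpa [Submonoid.smul_def] using this
  have h3 : (w : S) • g ⟨x, hx⟩ = (algebraMap S R (w : S)) • g ⟨x, hx⟩ :=
    (algebraMap_smul R (w : S) _).symm
  simp only [LinearMap.smul_apply, h2, h3, smul_smul, IsUnit.val_inv_mul, one_smul]

end Aux2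

section Main

variable {S : Type u} [CommRing S] (W : Submonoid S)
  (R : Type u) [CommRing R] [Algebra S R] [IsLocalization W R]

lemma aux_key [IsNoetherianRing S] (n : ℕ) :
    ∀ (M : Type u) [AddCommGroup M] [Module S M]
      (M' : Type u) [AddCommGroup M'] [Module S M'] [Module R M'] [IsScalarTower S R M']
      (g : M →ₗ[S] M') [IsLocalizedModule W g],
      fddGE S n M → fddGE R n M' := by
  induction n with
  | zero => intro M _ _ M' _ _ _ _ g _ _; trivial
  | succ n ih =>
    intro M _ _ M' _ _ _ _ g _ hM
    obtain ⟨I, _, _, hflat, hinj, f, hfinj, hrest⟩ := hM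
    let I' : Type u := TensorProduct S R I
    let ι : I →ₗ[S] I' := TensorProduct.mk S R I 1
    haveI : IsLocalizedModule W ι :=
      (isLocalizedModule_iff_isBaseChange W R ι).mpr (TensorProduct.isBaseChange S I R)
    haveI : Module.Flat S I := hflat
    haveI hflat' : Module.Flat R I' := Module.Flat.of_isLocalizedModule (Rp := R) W ι
    haveI : Module.Injective S I := hinj
    haveI hinj' : Module.Injective R I' := aux_injective W R I I' ι
    let f' : M' →ₗ[R] I' := (IsLocalizedModule.map W g ι f).extendScalarsOfIsLocalization W R
    have hf'inj : Function.Injective f' := IsLocalizedModule.map_injective W g ι f hfinj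
    refine ⟨I', inferInstance, inferInstance, hflat', hinj', f', hf'inj, ?_⟩
    have hrange : LinearMap.range f' = (LinearMap.range f).localized' R W ι :=
      (LinearMap.localized'_range_eq_range_localizedMap R W g ι f).symm
    rw [hrange]
    exact ih (I ⧸ LinearMap.range f) (I' ⧸ (LinearMap.range f).localized' R W ι)
      ((LinearMap.range f).toLocalizedQuotient' R W ι) hrest

end Main

theorem stmt17 (S : Type u) [CommRing S] [IsNoetherianRing S]
    (W : Submonoid S) (R : Type u) [CommRing R] [Algebra S R] [IsLocalization W R] :
    ∀ n : ℕ, fddGE S n S → fddGE R n R := by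
  exact fun n => aux_key W R n S R (Algebra.linearMap S R)
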